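/- Let A : X → X and C : X → Y be linear maps on finite-dimensional complex spaces. If there exists an output-injection operator L : Y → X such that A + LC has spectral radius less than 1, then for every z in the closed unit disk the block column matrix [I - zA; C] is injective. -/
import Mathlib


open Matrix

/-- Operator-detectability implies Hautus-detectability:
if `A + L C` has spectral radius `< 1` for some output injection `L`, then for
every `z` in the closed unit disk the block column `[I - z A; C]` is injective. -/
theorem operator_detectable_implies_hautus {n y : Type*} [Fintype n] [Fintype y]
    [DecidableEq n]
    (A : Matrix n n ℂ) (C : Matrix y n ℂ)
    (h : ∃ L : Matrix n y ℂ, ∀ μ ∈ spectrum ℂ (A + L * C), ‖μ‖ < 1) :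
    ∀ z : ℂ, ‖z‖ ≤ 1 →
      Function.Injective (fun x : n → ℂ => ((1 - z • A).mulVec x, C.mulVec x)) := by
  obtain ⟨L, hL⟩ := h
  intro z hz
  have key : ∀ x : n → ℂ, (1 - z • A).mulVec x = 0 → C.mulVec x = 0 → x = 0 := by
    intro x h1 h2
    by_contra hx
    have hxz : x = z • (A.mulVec x) := by
      have := h1
      rw [sub_mulVec, one_mulVec, smul_mulVec, sub_eq_zero] at this
      exact this
    have hzne : z ≠ 0 := by
      rintro rfl
      simp at hxz
      exact hx hxz
    have heig : (A + L * C).mulVec x = z⁻¹ • x := by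
      rw [add_mulVec, ← mulVec_mulVec, h2, mulVec_zero, add_zero]
      have : z⁻¹ • x = z⁻¹ • (z • A.mulVec x) := by rw [← hxz]
      rw [this, smul_smul, inv_mul_cancel₀ hzne, one_smul]
    have hmem : z⁻¹ ∈ spectrum ℂ (A + L * C) := by
      rw [spectrum.mem_iff]
      intro hu
      obtain ⟨u, hu⟩ := hu
      have h0 : (algebraMap ℂ (Matrix n n ℂ) z⁻¹ - (A + L * C)).mulVec x = 0 := by
        rw [sub_mulVec, heig, Algebra.algebraMap_eq_smul_one, smul_mulVec,
          one_mulVec, sub_self]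
      have : x = 0 := by
        calc x = (1 : Matrix n n ℂ).mulVec x := (one_mulVec x).symm
        _ = ((↑u⁻¹ * ↑u : Matrix n n ℂ)).mulVec x := by rw [u.inv_mul]
        _ = (↑u⁻¹ : Matrix n n ℂ).mulVec ((↑u : Matrix n n ℂ).mulVec x) := by
            rw [mulVec_mulVec]
        _ = 0 := by rw [hu, h0, mulVec_zero]
      exact hx this
    have := hL _ hmem
    have hzpos : (0:ℝ) < ‖z‖ := norm_pos_iff.mpr hzne
    have hmul : ‖z‖ * ‖z⁻¹‖ = 1 := by
      rw [← norm_mul, mul_inv_cancel₀ hzne, norm_one]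
    nlinarith
  intro x₁ x₂ heq
  simp only [Prod.mk.injEq] at heq
  have h1 : (1 - z • A).mulVec (x₁ - x₂) = 0 := by
    rw [mulVec_sub, heq.1, sub_self]
  have h2 : C.mulVec (x₁ - x₂) = 0 := by
    rw [mulVec_sub, heq.2, sub_self]
  have := key _ h1 h2
  exact sub_eq_zero.mp this
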